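/- Let μ and ν be probability measures on a measurable space X and let κ be a Markov kernel from X to a measurable space Y. Then the Kullback–Leibler divergence is non-increasing under the action of the kernel: KL(κ∘μ ‖ κ∘ν) ≤ KL(μ ‖ ν). (This is the paper's Lemma 1, the data-processing lemma for the KL distance along a Markov chain.) -/

import Mathlib

open MeasureTheory ProbabilityTheory
open scoped Classical

/-- The Kullback–Leibler divergence `KL(μ ‖ ν)`: equal to `∫ log (dμ/dν) dμ` when
`μ` is absolutely continuous w.r.t. `ν` (and the log-likelihood ratio is
integrable), and `+∞` otherwise. -/

noncomputable def klDiv {α : Type*} [MeasurableSpace α] (μ ν : Measure α) : EReal :=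
  if μ ≪ ν ∧ Integrable (llr μ ν) μ then ((∫ x, llr μ ν x ∂μ : ℝ) : EReal) else ⊤

section Aux

open Real Filter
open scoped ENNReal Topology

namespace KLAux

variable {X Y : Type*} [MeasurableSpace X] [MeasurableSpace Y]

lemma isProbabilityMeasure_bind (μ : Measure X) [IsProbabilityMeasure μ]
    (κ : Kernel X Y) [IsMarkovKernel κ] : IsProbabilityMeasure (μ.bind κ) := by
  constructor
  rw [Measure.bind_apply MeasurableSet.univ (Kernel.measurable κ).aemeasurable]
  simp

lemma bind_ac {μ ν : Measure X} (hμν : μ ≪ ν) (κ : Kernel X Y) :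
    μ.bind κ ≪ ν.bind κ := by
  refine Measure.AbsolutelyContinuous.mk fun s hs h0 => ?_
  rw [Measure.bind_apply hs (Kernel.measurable κ).aemeasurable] at h0 ⊢
  have h := (lintegral_eq_zero_iff (Kernel.measurable_coe κ hs)).mp h0
  rw [lintegral_eq_zero_iff (Kernel.measurable_coe κ hs)]
  exact hμν.ae_le h

lemma map_snd_compProd (μ : Measure X) [SFinite μ] (κ : Kernel X Y) [IsSFiniteKernel κ] :
    (μ ⊗ₘ κ).map Prod.snd = μ.bind κ := by
  ext s hs
  rw [Measure.map_apply measurable_snd hs, Measure.compProd_apply (measurable_snd hs),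
    Measure.bind_apply hs (Kernel.measurable κ).aemeasurable]
  rfl

lemma integrable_bind_iff (μ : Measure X) [SFinite μ] (κ : Kernel X Y) [IsSFiniteKernel κ]
    {f : Y → ℝ} (hf : StronglyMeasurable f) :
    Integrable f (μ.bind κ) ↔ Integrable (fun p : X × Y => f p.2) (μ ⊗ₘ κ) := by
  rw [← map_snd_compProd μ κ,
    integrable_map_measure hf.aestronglyMeasurable measurable_snd.aemeasurable]
  rfl

lemma integral_bind (μ : Measure X) [SFinite μ] (κ : Kernel X Y) [IsSFiniteKernel κ]
    {f : Y → ℝ} (hf : StronglyMeasurable f) (hfi : Integrable f (μ.bind κ)) :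
    ∫ y, f y ∂(μ.bind κ) = ∫ x, ∫ y, f y ∂(κ x) ∂μ := by
  have h1 : Integrable (fun p : X × Y => f p.2) (μ ⊗ₘ κ) :=
    (integrable_bind_iff μ κ hf).mp hfi
  rw [← map_snd_compProd μ κ,
    integral_map measurable_snd.aemeasurable hf.aestronglyMeasurable]
  exact Measure.integral_compProd h1

lemma ae_bind {μ : Measure X} {κ : Kernel X Y} {p : Y → Prop} (hp : MeasurableSet {y | p y})
    (h : ∀ᵐ y ∂(μ.bind κ), p y) : ∀ᵐ x ∂μ, ∀ᵐ y ∂(κ x), p y := by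
  rw [ae_iff] at h
  have hc : MeasurableSet {y | ¬ p y} := by
    have : {y | ¬ p y} = {y | p y}ᶜ := rfl
    rw [this]; exact hp.compl
  rw [Measure.bind_apply hc (Kernel.measurable κ).aemeasurable] at h
  have h2 := (lintegral_eq_zero_iff (Kernel.measurable_coe κ hc)).mp h
  filter_upwards [h2] with x hx
  rw [ae_iff]
  exact hx

lemma mul_neg_log_le {x : ℝ} (hx : 0 ≤ x) : x * max (-Real.log x) 0 ≤ Real.exp (-1) := by
  rcases eq_or_lt_of_le hx with h | hx0
  · simp [← h, Real.exp_pos (-1) |>.le]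
  rcases le_total (Real.log x) 0 with hl | hl
  · have hmax : max (-Real.log x) 0 = -Real.log x := max_eq_left (by linarith)
    rw [hmax]
    have h1 : Real.log (1 / (Real.exp 1 * x)) ≤ 1 / (Real.exp 1 * x) - 1 :=
      Real.log_le_sub_one_of_pos (by positivity)
    have h2 : Real.log (1 / (Real.exp 1 * x)) = -(1 + Real.log x) := by
      rw [Real.log_div one_ne_zero (by positivity), Real.log_mul (Real.exp_ne_zero 1) hx0.ne',
        Real.log_exp, Real.log_one]
      ring
    have h3 : -Real.log x ≤ 1 / (Real.exp 1 * x) := by linarith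
    have h4 : x * (-Real.log x) ≤ x * (1 / (Real.exp 1 * x)) :=
      mul_le_mul_of_nonneg_left h3 hx
    have h5 : x * (1 / (Real.exp 1 * x)) = 1 / Real.exp 1 := by
      field_simp
    rw [Real.exp_neg]
    calc x * (-Real.log x) ≤ 1 / Real.exp 1 := by rw [← h5]; exact h4
      _ = (Real.exp 1)⁻¹ := one_div _
  · have hmax : max (-Real.log x) 0 = 0 := max_eq_right (by linarith)
    rw [hmax, mul_zero]
    exact (Real.exp_pos _).le

lemma main_aux (μ ν : Measure X) [IsProbabilityMeasure μ] [IsProbabilityMeasure ν]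
    (κ : Kernel X Y) [IsMarkovKernel κ] (hac : μ ≪ ν) (hint : Integrable (llr μ ν) μ) :
    Integrable (llr (μ.bind κ) (ν.bind κ)) (μ.bind κ) ∧
      ∫ y, llr (μ.bind κ) (ν.bind κ) y ∂(μ.bind κ) ≤ ∫ x, llr μ ν x ∂μ := by
  haveI hPP : IsProbabilityMeasure (μ.bind κ) := isProbabilityMeasure_bind μ κ
  haveI hQQ : IsProbabilityMeasure (ν.bind κ) := isProbabilityMeasure_bind ν κ
  set P := μ.bind κ with hPdef
  set Q := ν.bind κ with hQdef
  have hPQ : P ≪ Q := bind_ac hac κ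
  set C : ℝ := ∫ x, llr μ ν x ∂μ with hC
  set L : Y → ℝ := llr P Q with hL
  set g : X → ℝ := fun x => (μ.rnDeriv ν x).toReal with hg
  set h : Y → ℝ := fun y => (P.rnDeriv Q y).toReal with hh
  have hLmeas : Measurable L := measurable_llr P Q
  have hhmeas : Measurable h := (Measure.measurable_rnDeriv P Q).ennreal_toReal
  have hgmeas : Measurable g := (Measure.measurable_rnDeriv μ ν).ennreal_toReal
  have hLh : ∀ y, L y = Real.log (h y) := fun y => rfl
  set N : Y → ℝ := fun y => max (-L y) 0 with hN
  have hNmeas : Measurable N := hLmeas.neg.max measurable_const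
  have hN0 : ∀ y, 0 ≤ N y := fun y => le_max_right _ _
  -- Step A : the negative part has finite integral
  have hKneg : ∫⁻ y, ENNReal.ofReal (N y) ∂P ≤ ENNReal.ofReal (Real.exp (-1)) := by
    rw [← lintegral_rnDeriv_mul hPQ (hNmeas.ennreal_ofReal.aemeasurable)]
    have hb : ∀ᵐ y ∂Q, P.rnDeriv Q y * ENNReal.ofReal (N y) ≤ ENNReal.ofReal (Real.exp (-1)) := by
      filter_upwards [Measure.rnDeriv_lt_top P Q] with y hy
      have he : P.rnDeriv Q y = ENNReal.ofReal (h y) := (ENNReal.ofReal_toReal hy.ne).symm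
      rw [he, ← ENNReal.ofReal_mul ENNReal.toReal_nonneg]
      exact ENNReal.ofReal_le_ofReal (mul_neg_log_le ENNReal.toReal_nonneg)
    calc ∫⁻ y, P.rnDeriv Q y * ENNReal.ofReal (N y) ∂Q
        ≤ ∫⁻ _, ENNReal.ofReal (Real.exp (-1)) ∂Q := lintegral_mono_ae hb
      _ = ENNReal.ofReal (Real.exp (-1)) := by simp
  have hNint : Integrable N P := by
    refine ⟨hNmeas.aestronglyMeasurable, ?_⟩
    rw [hasFiniteIntegral_iff_ofReal (ae_of_all _ hN0)]
    exact lt_of_le_of_lt hKneg ENNReal.ofReal_lt_top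
  -- Step B : truncations are integrable
  have hMin_int : ∀ n : ℕ, Integrable (fun y => min (L y) n) P := by
    intro n
    refine (hNint.add (integrable_const (n : ℝ))).mono'
      ((hLmeas.min measurable_const).aestronglyMeasurable) (ae_of_all _ fun y => ?_)
    have h1 : -L y ≤ N y := le_max_left _ _
    have h2 : (0:ℝ) ≤ n := Nat.cast_nonneg n
    simp only [Pi.add_apply]
    rw [Real.norm_eq_abs, abs_le]
    constructor
    · refine le_min (by linarith) (by linarith [hN0 y])
    · exact le_trans (min_le_right _ _) (by linarith [hN0 y])
  -- Step C : key truncated inequality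
  have hKey : ∀ n : ℕ, ∫ y, min (L y) n ∂P ≤ C := by
    intro n
    set en : ℝ := Real.exp n with hen
    set m : Y → ℝ := fun y => min (h y) en with hm
    have hmmeas : Measurable m := hhmeas.min measurable_const
    have hm0 : ∀ y, 0 ≤ m y := fun y => le_min ENNReal.toReal_nonneg (Real.exp_pos _).le
    have hmle : ∀ y, m y ≤ en := fun y => min_le_right _ _
    set F : X → ℝ := fun x => ∫ y, m y ∂κ x with hF
    have hFmeas : StronglyMeasurable F :=
      StronglyMeasurable.integral_kernel_prod_right
        (f := fun _ y => m y) ((hmmeas.comp measurable_snd).stronglyMeasurable)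
    have hmint : ∀ x : X, Integrable m (κ x) := fun x =>
      (integrable_const en).mono' hmmeas.aestronglyMeasurable
        (ae_of_all _ fun y => by rw [Real.norm_eq_abs, abs_of_nonneg (hm0 y)]; exact hmle y)
    have hF0 : ∀ x, 0 ≤ F x := fun x => integral_nonneg hm0
    have hdivmeas : Measurable fun x => F x / g x := hFmeas.measurable.div hgmeas
    have hdiv0 : ∀ x, 0 ≤ F x / g x := fun x => div_nonneg (hF0 x) ENNReal.toReal_nonneg
    have hlin : ∫⁻ x, ENNReal.ofReal (F x / g x) ∂μ ≤ 1 := by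
      rw [← lintegral_rnDeriv_mul hac
        (hdivmeas.ennreal_ofReal.aemeasurable)]
      have h2 : ∀ᵐ x ∂ν, μ.rnDeriv ν x * ENNReal.ofReal (F x / g x) ≤ ENNReal.ofReal (F x) := by
        filter_upwards [Measure.rnDeriv_lt_top μ ν] with x hx
        rcases eq_or_ne (μ.rnDeriv ν x) 0 with h0 | h0
        · rw [h0, zero_mul]; exact zero_le
        · have hgpos : 0 < g x := ENNReal.toReal_pos h0 hx.ne
          have he : μ.rnDeriv ν x = ENNReal.ofReal (g x) := (ENNReal.ofReal_toReal hx.ne).symm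
          rw [he, ← ENNReal.ofReal_mul ENNReal.toReal_nonneg]
          exact ENNReal.ofReal_le_ofReal (le_of_eq (mul_div_cancel₀ _ hgpos.ne'))
      refine le_trans (lintegral_mono_ae h2) ?_
      have h3 : ∀ x, ENNReal.ofReal (F x) = ∫⁻ y, ENNReal.ofReal (m y) ∂κ x := fun x =>
        MeasureTheory.ofReal_integral_eq_lintegral_ofReal (hmint x) (ae_of_all _ hm0)
      calc ∫⁻ x, ENNReal.ofReal (F x) ∂ν
          = ∫⁻ x, ∫⁻ y, ENNReal.ofReal (m y) ∂κ x ∂ν := by simp_rw [h3]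
        _ = ∫⁻ y, ENNReal.ofReal (m y) ∂Q :=
            (Measure.lintegral_bind (Kernel.measurable κ).aemeasurable
              (hmmeas.ennreal_ofReal).aemeasurable).symm
        _ ≤ ∫⁻ y, P.rnDeriv Q y ∂Q := by
            refine lintegral_mono_ae ?_
            filter_upwards [Measure.rnDeriv_lt_top P Q] with y hy
            calc ENNReal.ofReal (m y) ≤ ENNReal.ofReal (h y) :=
                  ENNReal.ofReal_le_ofReal (min_le_left _ _)
              _ = P.rnDeriv Q y := ENNReal.ofReal_toReal hy.ne
        _ ≤ P Set.univ := Measure.lintegral_rnDeriv_le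
        _ = 1 := measure_univ
    have hdivint : Integrable (fun x => F x / g x) μ := by
      refine ⟨hdivmeas.aestronglyMeasurable, ?_⟩
      rw [hasFiniteIntegral_iff_ofReal (ae_of_all _ hdiv0)]
      exact lt_of_le_of_lt hlin ENNReal.one_lt_top
    have hdivle : ∫ x, F x / g x ∂μ ≤ 1 := by
      rw [integral_eq_lintegral_of_nonneg_ae (ae_of_all _ hdiv0) hdivmeas.aestronglyMeasurable]
      calc (∫⁻ x, ENNReal.ofReal (F x / g x) ∂μ).toReal ≤ (1 : ℝ≥0∞).toReal :=
            ENNReal.toReal_mono ENNReal.one_ne_top hlin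
        _ = 1 := by simp
    have hbind_int := hMin_int n
    have hcomp : Integrable (fun p : X × Y => min (L p.2) n) (μ ⊗ₘ κ) :=
      (integrable_bind_iff μ κ (hLmeas.min measurable_const).stronglyMeasurable).mp hbind_int
    have hslice := (Measure.integrable_compProd_iff hcomp.aestronglyMeasurable).mp hcomp
    have haeP : ∀ᵐ y ∂P, 0 < h y := by
      filter_upwards [Measure.rnDeriv_pos hPQ, hPQ.ae_le (Measure.rnDeriv_lt_top P Q)]
        with y h1 h2
      exact ENNReal.toReal_pos h1.ne' h2.ne
    have haefiber : ∀ᵐ x ∂μ, ∀ᵐ y ∂κ x, 0 < h y :=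
      ae_bind (measurableSet_lt measurable_const hhmeas) haeP
    have hptwise : ∀ᵐ x ∂μ, ∫ y, min (L y) n ∂κ x ≤ llr μ ν x + (F x / g x - 1) := by
      filter_upwards [Measure.rnDeriv_pos hac, hac.ae_le (Measure.rnDeriv_lt_top μ ν),
        haefiber, hslice.1] with x h1 h2 h3 h4
      have hgpos : 0 < g x := ENNReal.toReal_pos h1.ne' h2.ne
      have hloggx : llr μ ν x = Real.log (g x) := rfl
      have hptw : ∀ᵐ y ∂κ x, min (L y) n ≤ Real.log (g x) + (m y / g x - 1) := by
        filter_upwards [h3] with y hy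
        have hmpos : 0 < m y := lt_min hy (Real.exp_pos _)
        have e1 : min (L y) n = Real.log (m y) := by
          rw [hLh y]
          rcases le_total (h y) en with hc | hc
          · rw [show m y = h y from min_eq_left hc, min_eq_left]
            calc Real.log (h y) ≤ Real.log en := Real.log_le_log hy hc
              _ = n := Real.log_exp _
          · rw [show m y = en from min_eq_right hc, Real.log_exp, min_eq_right]
            calc (n:ℝ) = Real.log en := (Real.log_exp _).symm
              _ ≤ Real.log (h y) := Real.log_le_log (Real.exp_pos _) hc
        have e2 : Real.log (m y) - Real.log (g x) = Real.log (m y / g x) :=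
          (Real.log_div hmpos.ne' hgpos.ne').symm
        have e3 : Real.log (m y / g x) ≤ m y / g x - 1 :=
          Real.log_le_sub_one_of_pos (by positivity)
        rw [e1]
        linarith
      have hsub : Integrable (fun y => m y / g x - 1) (κ x) :=
        ((hmint x).div_const (g x)).sub (integrable_const 1)
      have hRint : Integrable (fun y => Real.log (g x) + (m y / g x - 1)) (κ x) :=
        (integrable_const _).add hsub
      calc ∫ y, min (L y) n ∂κ x
          ≤ ∫ y, (Real.log (g x) + (m y / g x - 1)) ∂κ x := integral_mono_ae h4 hRint hptw
        _ = Real.log (g x) + (F x / g x - 1) := by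
            rw [integral_add (integrable_const _) hsub,
              integral_sub ((hmint x).div_const (g x)) (integrable_const 1),
              integral_const, integral_const, integral_div]
            simp [measure_univ]
            rfl
        _ = llr μ ν x + (F x / g x - 1) := by rw [hloggx]
    have hI : ∫ y, min (L y) n ∂P = ∫ x, ∫ y, min (L y) n ∂κ x ∂μ :=
      integral_bind μ κ (hLmeas.min measurable_const).stronglyMeasurable hbind_int
    have hIint : Integrable (fun x => ∫ y, min (L y) n ∂κ x) μ := by
      refine hslice.2.mono' ?_ (ae_of_all _ fun x => ?_)
      · exact (StronglyMeasurable.integral_kernel_prod_right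
          (f := fun _ y => min (L y) n)
          (((hLmeas.min measurable_const).comp measurable_snd).stronglyMeasurable)).aestronglyMeasurable
      · exact norm_integral_le_integral_norm _
    have hsub2 : Integrable (fun x => F x / g x - 1) μ :=
      hdivint.sub (integrable_const 1)
    have hRint2 : Integrable (fun x => llr μ ν x + (F x / g x - 1)) μ :=
      hint.add hsub2
    calc ∫ y, min (L y) n ∂P = ∫ x, ∫ y, min (L y) n ∂κ x ∂μ := hI
      _ ≤ ∫ x, (llr μ ν x + (F x / g x - 1)) ∂μ := integral_mono_ae hIint hRint2 hptwise
      _ = C + (∫ x, F x / g x ∂μ - 1) := by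
          rw [integral_add hint hsub2,
            integral_sub hdivint (integrable_const 1), integral_const]
          simp [measure_univ]
          rfl
      _ ≤ C + (1 - 1) := by linarith [hdivle]
      _ = C := by ring
  -- Step D : integrability of L
  have hLint : Integrable L P := by
    set Kneg : ℝ≥0∞ := ∫⁻ y, ENNReal.ofReal (N y) ∂P with hKn
    have hKfin : Kneg ≠ ∞ := (lt_of_le_of_lt hKneg ENNReal.ofReal_lt_top).ne
    have hnegbound : ∫⁻ y, ENNReal.ofReal (-(L y)) ∂P ≤ Kneg :=
      lintegral_mono fun y => ENNReal.ofReal_le_ofReal (le_max_left _ _)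
    have hposbound : ∫⁻ y, ENNReal.ofReal (L y) ∂P ≤ ENNReal.ofReal (C + Kneg.toReal) := by
      have hn : ∀ n : ℕ, ∫⁻ y, ENNReal.ofReal (min (L y) n) ∂P
          ≤ ENNReal.ofReal (C + Kneg.toReal) := by
        intro n
        have hfin : ∫⁻ y, ENNReal.ofReal (min (L y) n) ∂P ≠ ∞ := by
          refine (lt_of_le_of_lt
            (lintegral_mono fun y => ENNReal.ofReal_le_ofReal (min_le_right _ _)) ?_).ne
          rw [lintegral_const, measure_univ, mul_one]
          exact ENNReal.ofReal_lt_top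
        have hrepr := integral_eq_lintegral_pos_part_sub_lintegral_neg_part (hMin_int n)
        have hnegle : ∫⁻ y, ENNReal.ofReal (-(min (L y) n)) ∂P ≤ Kneg := by
          refine lintegral_mono fun y => ENNReal.ofReal_le_ofReal ?_
          rcases le_total (L y) n with hc | hc
          · rw [min_eq_left hc]; exact le_max_left _ _
          · rw [min_eq_right hc]
            have : (0:ℝ) ≤ n := Nat.cast_nonneg n
            linarith [hN0 y]
        have h2 : (∫⁻ y, ENNReal.ofReal (-(min (L y) n)) ∂P).toReal ≤ Kneg.toReal :=
          ENNReal.toReal_mono hKfin hnegle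
        have h1 : (∫⁻ y, ENNReal.ofReal (min (L y) n) ∂P).toReal ≤ C + Kneg.toReal := by
          linarith [hKey n]
        calc ∫⁻ y, ENNReal.ofReal (min (L y) n) ∂P
            = ENNReal.ofReal ((∫⁻ y, ENNReal.ofReal (min (L y) n) ∂P).toReal) :=
              (ENNReal.ofReal_toReal hfin).symm
          _ ≤ ENNReal.ofReal (C + Kneg.toReal) := ENNReal.ofReal_le_ofReal h1
      have hmono : Monotone fun (n : ℕ) (y : Y) => ENNReal.ofReal (min (L y) n) :=
        fun a b hab y =>
          ENNReal.ofReal_le_ofReal (min_le_min le_rfl (Nat.cast_le.mpr hab))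
      have hsup : ∀ y, ⨆ n : ℕ, ENNReal.ofReal (min (L y) n) = ENNReal.ofReal (L y) := by
        intro y
        refine le_antisymm (iSup_le fun k => ENNReal.ofReal_le_ofReal (min_le_left _ _)) ?_
        refine le_iSup_of_le ⌈L y⌉₊ (le_of_eq ?_)
        rw [min_eq_left (Nat.le_ceil _)]
      have hmc : ∫⁻ y, ENNReal.ofReal (L y) ∂P
          = ⨆ n : ℕ, ∫⁻ y, ENNReal.ofReal (min (L y) n) ∂P := by
        rw [← lintegral_iSup
          (fun k => (hLmeas.min measurable_const).ennreal_ofReal) hmono]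
        simp_rw [hsup]
      rw [hmc]
      exact iSup_le hn
    refine ⟨hLmeas.aestronglyMeasurable, ?_⟩
    rw [hasFiniteIntegral_iff_norm]
    have hsplit : ∀ y, ENNReal.ofReal ‖L y‖ ≤ ENNReal.ofReal (L y) + ENNReal.ofReal (-(L y)) := by
      intro y
      rcases le_total 0 (L y) with hc | hc
      · rw [Real.norm_eq_abs, abs_of_nonneg hc]; exact le_self_add
      · rw [Real.norm_eq_abs, abs_of_nonpos hc]; exact le_add_self
    calc ∫⁻ y, ENNReal.ofReal ‖L y‖ ∂P
        ≤ ∫⁻ y, (ENNReal.ofReal (L y) + ENNReal.ofReal (-(L y))) ∂P :=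
          lintegral_mono hsplit
      _ = (∫⁻ y, ENNReal.ofReal (L y) ∂P) + ∫⁻ y, ENNReal.ofReal (-(L y)) ∂P :=
          lintegral_add_left hLmeas.ennreal_ofReal _
      _ < ∞ := ENNReal.add_lt_top.mpr
          ⟨lt_of_le_of_lt hposbound ENNReal.ofReal_lt_top,
           lt_of_le_of_lt hnegbound (lt_of_le_of_lt hKneg ENNReal.ofReal_lt_top)⟩
  -- Step E : the limit inequality
  have hE : ∫ y, L y ∂P ≤ C := by
    have htend : Tendsto (fun n : ℕ => ∫ y, min (L y) n ∂P) atTop (𝓝 (∫ y, L y ∂P)) := by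
      refine tendsto_integral_of_dominated_convergence (fun y => |L y|)
        (fun n => (hLmeas.min measurable_const).aestronglyMeasurable) hLint.abs
        (fun n => ae_of_all _ fun y => ?_) (ae_of_all _ fun y => ?_)
      · have h2 : (0:ℝ) ≤ n := Nat.cast_nonneg n
        rw [Real.norm_eq_abs, abs_le]
        rcases le_total (L y) n with hc | hc
        · rw [min_eq_left hc]; exact abs_le.mp le_rfl
        · rw [min_eq_right hc]
          exact ⟨by nlinarith [neg_abs_le (L y), le_abs_self (L y)], by nlinarith [le_abs_self (L y)]⟩
      · have : ∀ᶠ n : ℕ in atTop, min (L y) n = L y := by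
          refine eventually_atTop.mpr ⟨⌈L y⌉₊, fun n hn => min_eq_left ?_⟩
          exact le_trans (Nat.le_ceil _) (Nat.cast_le.mpr hn)
        exact Tendsto.congr' (this.mono fun n hn => hn.symm) tendsto_const_nhds
    exact le_of_tendsto htend (Eventually.of_forall hKey)
  exact ⟨hLint, hE⟩


end KLAux

end Aux

/-- Data-processing inequality: the KL divergence is non-increasing under the
action of a Markov kernel, `KL(κ∘μ ‖ κ∘ν) ≤ KL(μ ‖ ν)`. -/
theorem klDiv_comp_le {X Y : Type*} [MeasurableSpace X] [MeasurableSpace Y]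
    (μ ν : Measure X) [IsProbabilityMeasure μ] [IsProbabilityMeasure ν]
    (κ : Kernel X Y) [IsMarkovKernel κ] :
    klDiv (μ.bind κ) (ν.bind κ) ≤ klDiv μ ν := by
  by_cases hc : μ ≪ ν ∧ Integrable (llr μ ν) μ
  · obtain ⟨hac, hint⟩ := hc
    obtain ⟨hLint, hE⟩ := KLAux.main_aux μ ν κ hac hint
    have hPQ : μ.bind κ ≪ ν.bind κ := KLAux.bind_ac hac κ
    unfold klDiv
    rw [if_pos ⟨hPQ, hLint⟩, if_pos ⟨hac, hint⟩]
    exact EReal.coe_le_coe_iff.mpr hE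
  · have : klDiv μ ν = ⊤ := by rw [klDiv, if_neg hc]
    rw [this]
    exact le_top
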